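/- arXiv:math/0002198 — 3 statements merged into one kernel-verified Lean document; each statement's English description precedes it below -/
import Mathlib

section
/- Let K be a compact operator on a Hilbert space. If (I+K)*(I+K) = I (equivalently, K + K* + K*K = 0), then I+K is unitary, i.e. also (I+K)(I+K)* = I; in particular −1 is not an eigenvalue of K and I+K is invertible. -/
noncomputable section


open ContinuousLinearMap Metric

variable {𝕜 : Type} [RCLike 𝕜] {H : Type} [NormedAddCommGroup H] [InnerProductSpace 𝕜 H]
    [CompleteSpace H]

local notation "⟪" x ", " y "⟫" => @inner 𝕜 _ _ x y

-- surjectivity lemma: an isometric T = 1 + K with K compact is surjective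
theorem aux_surj (K : H →L[𝕜] H) (hK : IsCompactOperator K)
    (h : ContinuousLinearMap.adjoint (1 + K) ∘L (1 + K) = 1) :
    Function.Surjective ⇑(1 + K : H →L[𝕜] H) := by
  set T : H →L[𝕜] H := 1 + K with hT
  have happly : ∀ x : H, ContinuousLinearMap.adjoint T (T x) = x := by
    intro x
    have := DFunLike.congr_fun h x
    simpa using this
  have hnorm : ∀ x : H, ‖T x‖ = ‖x‖ := by
    intro x
    have h1 : ⟪T x, T x⟫ = ⟪x, x⟫ := by
      rw [← ContinuousLinearMap.adjoint_inner_left, happly]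
    have h2 : ‖T x‖ ^ 2 = ‖x‖ ^ 2 := by
      have := congrArg (RCLike.re (K := 𝕜)) h1
      rwa [inner_self_eq_norm_sq, inner_self_eq_norm_sq] at this
    nlinarith [norm_nonneg (T x), norm_nonneg x]
  have hnormn : ∀ (n : ℕ) (x : H), ‖(T ^ n) x‖ = ‖x‖ := by
    intro n
    induction n with
    | zero => simp
    | succ n ih =>
      intro x
      rw [pow_succ, ContinuousLinearMap.mul_apply, ih, hnorm]
  have hiso : ∀ n : ℕ, Isometry (T ^ n) :=
    fun n => AddMonoidHomClass.isometry_of_norm _ (hnormn n)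
  set V : ℕ → Submodule 𝕜 H := fun n => LinearMap.range ((T ^ n : H →L[𝕜] H) : H →ₗ[𝕜] H) with hV
  have hclosed : ∀ n, IsClosed (V n : Set H) := by
    intro n
    have := (hiso n).isClosedEmbedding.isClosed_range
    convert this using 1
    exact LinearMap.coe_range _
  have hmono : ∀ m n : ℕ, m ≤ n → V n ≤ V m := by
    intro m n hmn
    obtain ⟨k, rfl⟩ := Nat.exists_eq_add_of_le hmn
    rintro _ ⟨x, rfl⟩
    exact ⟨(T ^ k) x, by rw [pow_add]; rfl⟩
  have hstep : ∀ (n : ℕ) (x : H), x ∈ V n → T x ∈ V (n + 1) := by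
    rintro n _ ⟨w, rfl⟩
    exact ⟨w, by rw [pow_succ']; rfl⟩
  by_contra hns
  rw [Function.Surjective] at hns
  push_neg at hns
  obtain ⟨y, hy⟩ := hns
  have hz : ∀ n, (T ^ n) y ∈ V n := fun n => ⟨y, rfl⟩
  have hz' : ∀ n, (T ^ n) y ∉ V (n + 1) := by
    rintro n ⟨x, hx⟩
    rw [pow_succ] at hx
    exact hy x ((hiso n).injective hx)
  -- unit vectors
  have key : ∀ n, ∃ u : H, ‖u‖ = 1 ∧ u ∈ V n ∧ u ∈ (V (n + 1))ᗮ := by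
    intro n
    haveI : CompleteSpace (V (n + 1)) := (hclosed (n + 1)).completeSpace_coe
    set z := (T ^ n) y with hzdef
    set w := z - (Submodule.orthogonalProjection (V (n + 1)) z : H) with hw
    have hw1 : w ∈ (V (n + 1))ᗮ := Submodule.sub_starProjection_mem_orthogonal (K := V (n + 1)) z
    have hw2 : w ∈ V n := by
      exact Submodule.sub_mem _ (hz n)
        (hmono n (n + 1) (Nat.le_succ n) (Submodule.orthogonalProjection (V (n + 1)) z).2)
    have hw0 : w ≠ 0 := by
      intro h0
      apply hz' n
      have : z = (Submodule.orthogonalProjection (V (n + 1)) z : H) := by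
        rwa [hw, sub_eq_zero] at h0
      rw [← hzdef, this]
      exact (Submodule.orthogonalProjection (V (n + 1)) z).2
    refine ⟨((‖w‖ : 𝕜))⁻¹ • w, ?_, Submodule.smul_mem _ _ hw2, Submodule.smul_mem _ _ hw1⟩
    rw [norm_smul, norm_inv, RCLike.norm_ofReal, abs_norm,
      inv_mul_cancel₀ (norm_ne_zero_iff.mpr hw0)]
  choose u hu1 hu2 hu3 using key
  -- separation
  have hKx : ∀ x : H, K x = T x - x := by intro x; simp [hT]
  have hsep : ∀ m n : ℕ, m < n → 1 ≤ ‖K (u n) - K (u m)‖ := by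
    intro m n hmn
    set c := T (u n) - u n - T (u m) with hc
    have hcmem : c ∈ V (m + 1) := by
      refine Submodule.sub_mem _ (Submodule.sub_mem _ ?_ ?_) ?_
      · exact hmono (m + 1) (n + 1) (Nat.succ_le_succ hmn.le) (hstep n _ (hu2 n))
      · exact hmono (m + 1) n hmn (hu2 n)
      · exact hstep m _ (hu2 m)
    have heq : K (u n) - K (u m) = u m + c := by
      rw [hKx, hKx, hc]; abel
    have hinner : ⟪u m, c⟫ = 0 := (Submodule.mem_orthogonal' _ _).mp (hu3 m) c hcmem
    have hsq : ‖u m + c‖ * ‖u m + c‖ = ‖u m‖ * ‖u m‖ + ‖c‖ * ‖c‖ :=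
      norm_add_sq_eq_norm_sq_add_norm_sq_of_inner_eq_zero _ _ hinner
    rw [heq]
    nlinarith [norm_nonneg (u m + c), norm_nonneg c, hu1 m]
  -- compactness contradiction
  have hK' : IsCompactOperator ⇑(K.toLinearMap) := hK
  have hcomp : IsCompact (closure (⇑K.toLinearMap '' closedBall 0 1)) :=
    hK'.isCompact_closure_image_closedBall 1
  have hmem : ∀ n, K (u n) ∈ closure (⇑K.toLinearMap '' closedBall 0 1) := by
    intro n
    exact subset_closure ⟨u n, by simp [hu1 n], rfl⟩
  obtain ⟨a, -, φ, hφ, hconv⟩ := hcomp.tendsto_subseq hmem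
  have hcauchy := hconv.cauchySeq
  rw [Metric.cauchySeq_iff] at hcauchy
  obtain ⟨N, hN⟩ := hcauchy 1 one_pos
  have h1 := hN (N + 1) (Nat.le_succ N) N le_rfl
  have h2 := hsep (φ N) (φ (N + 1)) (hφ (Nat.lt_succ_self N))
  rw [dist_eq_norm] at h1
  simp only [Function.comp_apply] at h1
  linarith


/-- Let `K` be a compact operator on a (real or complex) Hilbert space.
If `(I+K)*(I+K) = I` (equivalently, `K + K* + K*K = 0`), then `I+K` is unitary, i.e. also
`(I+K)(I+K)* = I`; in particular `−1` is not an eigenvalue of `K` and `I+K` is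
invertible.  (The first conjunct of the conclusion records the equivalence of the two
ways of writing the hypothesis.) -/
theorem statement2
    {𝕜 : Type} [RCLike 𝕜] {H : Type} [NormedAddCommGroup H] [InnerProductSpace 𝕜 H]
    [CompleteSpace H]
    (K : H →L[𝕜] H) (hK : IsCompactOperator K)
    (h : ContinuousLinearMap.adjoint (1 + K) ∘L (1 + K) = 1) :
    (ContinuousLinearMap.adjoint (1 + K) ∘L (1 + K) = 1 ↔
        K + ContinuousLinearMap.adjoint K + ContinuousLinearMap.adjoint K ∘L K = 0) ∧
    (1 + K) ∘L ContinuousLinearMap.adjoint (1 + K) = 1 ∧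
    (∀ x : H, K x = -x → x = 0) ∧
    IsUnit (1 + K) := by
  have hsurj := aux_surj K hK h
  have happly : ∀ x : H, ContinuousLinearMap.adjoint (1 + K) ((1 + K) x) = x := by
    intro x
    have := DFunLike.congr_fun h x
    simpa only [ContinuousLinearMap.comp_apply, ContinuousLinearMap.one_apply] using this
  have hinj : ∀ x : H, (1 + K) x = 0 → x = 0 := by
    intro x hx
    have := happly x
    rw [hx, map_zero] at this
    exact this.symm
  have hTT : (1 + K) ∘L ContinuousLinearMap.adjoint (1 + K) = 1 := by
    ext y
    obtain ⟨x, rfl⟩ := hsurj y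
    simp only [ContinuousLinearMap.comp_apply, ContinuousLinearMap.one_apply]
    rw [happly x]
  have hexpand : ContinuousLinearMap.adjoint (1 + K) ∘L (1 + K) =
      1 + (K + ContinuousLinearMap.adjoint K + ContinuousLinearMap.adjoint K ∘L K) := by
    rw [map_add, show ContinuousLinearMap.adjoint (1 : H →L[𝕜] H) = 1 from ContinuousLinearMap.adjoint_id]
    ext x
    simp only [ContinuousLinearMap.comp_apply, ContinuousLinearMap.add_apply,
      ContinuousLinearMap.one_apply, map_add]
    abel
  refine ⟨?_, hTT, ?_, ?_⟩
  · rw [hexpand]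
    constructor
    · intro h'
      exact (add_eq_left).mp h'
    · intro h'
      rw [h', add_zero]
  · intro x hx
    apply hinj
    simp [hx]
  · exact ⟨⟨1 + K, ContinuousLinearMap.adjoint (1 + K),
      by rw [ContinuousLinearMap.mul_def]; exact hTT,
      by rw [ContinuousLinearMap.mul_def]; exact h⟩, rfl⟩
end
end

section
/- Let (Π_θ, θ ∈ [0,2π]) be a resolution of the identity on a separable Hilbert space H such that θ ↦ (Π_θ h, k)_H is continuous on [0,2π] for every h, k ∈ H. Then for every n ≥ 1 and every f, g in the n-fold symmetric tensor power H^{⊙n}, the map (θ₁,…,θₙ) ↦ ((Π_{θ₁} ⊗ … ⊗ Π_{θₙ}) f, g)_{H^{⊙n}} is continuous on [0,2π]ⁿ. -/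
open MeasureTheory Filter Topology
open scoped InnerProductSpace

noncomputable section

/-- A resolution of the identity `(Π_θ, θ ∈ [0,2π])` on a complex Hilbert space `H`
(extended to all of `ℝ` by `Π_θ = 0` for `θ ≤ 0` and `Π_θ = I` for `θ ≥ 2π`): an
increasing, right-continuous family of orthogonal projections with `Π₀ = 0` and
`Π_{2π} = I`.  The last two fields record the (automatic) monotonicity and right
continuity of the distribution functions `θ ↦ (Π_θ x, x)`. -/
structure ResolutionOfIdentity (H : Type) [NormedAddCommGroup H]
    [InnerProductSpace ℂ H] where
  P : ℝ → H →L[ℂ] H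
  idem : ∀ θ : ℝ, P θ ∘L P θ = P θ
  selfadj : ∀ (θ : ℝ) (x y : H), ⟪P θ x, y⟫_ℂ = ⟪x, P θ y⟫_ℂ
  mono_comp : ∀ s t : ℝ, s ≤ t → P s ∘L P t = P s ∧ P t ∘L P s = P s
  norm_le : ∀ (θ : ℝ) (x : H), ‖P θ x‖ ≤ ‖x‖
  rightCont : ∀ (t : ℝ) (x : H), Tendsto (fun θ => P θ x) (𝓝[≥] t) (𝓝 (P t x))
  eq_zero : ∀ θ : ℝ, θ ≤ 0 → P θ = 0
  eq_one : ∀ θ : ℝ, 2 * Real.pi ≤ θ → P θ = 1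
  distrib_mono : ∀ x : H, Monotone fun θ => (⟪P θ x, x⟫_ℂ).re
  distrib_rightCont : ∀ (x : H) (t : ℝ),
    ContinuousWithinAt (fun θ => (⟪P θ x, x⟫_ℂ).re) (Set.Ici t) t

/-- The distribution function `θ ↦ (Π_θ x, x)` as a Stieltjes function. -/
def ResolutionOfIdentity.stieltjesOf {H : Type} [NormedAddCommGroup H]
    [InnerProductSpace ℂ H] (RI : ResolutionOfIdentity H) (x : H) :
    StieltjesFunction ℝ where
  toFun := fun θ => (⟪RI.P θ x, x⟫_ℂ).re
  mono' := RI.distrib_mono x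
  right_continuous' := RI.distrib_rightCont x

/-- The (positive, finite) spectral measure `d(Π_θ x, x)` on `ℝ` associated with a
resolution of the identity. -/
def ResolutionOfIdentity.specMeasure {H : Type} [NormedAddCommGroup H]
    [InnerProductSpace ℂ H] (RI : ResolutionOfIdentity H) (x : H) : Measure ℝ :=
  (RI.stieltjesOf x).measure

/-- `R = ∫₀^{2π} e^{iθ} dΠ_θ`: the unitary `R` has `(Π_θ)` as spectral resolution of the
identity (formulated via the diagonal spectral measures, which suffices by
polarization). -/
def ResolutionOfIdentity.IsSpectralResolutionOf {H : Type} [NormedAddCommGroup H]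
    [InnerProductSpace ℂ H] (RI : ResolutionOfIdentity H) (R : H ≃ₗᵢ[ℂ] H) : Prop :=
  ∀ x : H, ⟪x, R x⟫_ℂ = ∫ θ, Complex.exp (θ * Complex.I) ∂(RI.specMeasure x)

open scoped InnerProductSpace

/-- The `n`-fold Hilbert-space tensor power of `H`, presented axiomatically: a Hilbert
space `E` together with the canonical multilinear map `tprod(f) = f 1 ⊗ … ⊗ f n`, whose
inner products multiply and whose image spans densely; `map A = A 1 ⊗ … ⊗ A n` is the
tensor product of operators and `permute σ` permutes the factors. -/
structure HilbertTensorPower (𝕜 : Type) [RCLike 𝕜] (H : Type) [NormedAddCommGroup H]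
    [InnerProductSpace 𝕜 H] (n : ℕ) (E : Type) [NormedAddCommGroup E]
    [InnerProductSpace 𝕜 E] [CompleteSpace E] : Type where
  tprod : (Fin n → H) → E
  inner_tprod : ∀ f g : Fin n → H,
    ⟪tprod f, tprod g⟫_𝕜 = ∏ i, ⟪f i, g i⟫_𝕜
  dense_span : (Submodule.span 𝕜 (Set.range tprod)).topologicalClosure = ⊤
  map : (Fin n → H →L[𝕜] H) → (E →L[𝕜] E)
  map_tprod : ∀ (A : Fin n → H →L[𝕜] H) (f : Fin n → H),
    map A (tprod f) = tprod fun i => A i (f i)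
  map_norm : ∀ A : Fin n → H →L[𝕜] H, ‖map A‖ ≤ ∏ i, ‖A i‖
  permute : Equiv.Perm (Fin n) → (E ≃ₗᵢ[𝕜] E)
  permute_tprod : ∀ (σ : Equiv.Perm (Fin n)) (f : Fin n → H), permute σ (tprod f) = tprod (f ∘ σ)

/-- The symmetric tensors in the `n`-th tensor power: those fixed by all permutations of
the factors.  This realizes the symmetric tensor power `H^{⊙n}` inside `H^{⊗n}`. -/
def HilbertTensorPower.IsSymmetric {𝕜 : Type} [RCLike 𝕜] {H : Type}
    [NormedAddCommGroup H] [InnerProductSpace 𝕜 H] {n : ℕ} {E : Type}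
    [NormedAddCommGroup E] [InnerProductSpace 𝕜 E] [CompleteSpace E]
    (TP : HilbertTensorPower 𝕜 H n E) (x : E) : Prop :=
  ∀ σ : Equiv.Perm (Fin n), TP.permute σ x = x

/-- Let `(Π_θ)` be a resolution of the identity on a separable Hilbert
space `H` such that `θ ↦ (Π_θ h, k)` is continuous for all `h, k ∈ H`.  Then for every
`n ≥ 1` and all `f, g` in the symmetric tensor power `H^{⊙n}`, the function
`(θ₁,…,θₙ) ↦ ((Π_{θ₁} ⊗ … ⊗ Π_{θₙ})f, g)` is continuous. -/
theorem statement9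
    {H : Type} [NormedAddCommGroup H] [InnerProductSpace ℂ H] [CompleteSpace H]
    [TopologicalSpace.SeparableSpace H]
    (RI : ResolutionOfIdentity H)
    (hcont : ∀ x y : H, Continuous fun θ => ⟪RI.P θ x, y⟫_ℂ)
    (n : ℕ) (hn : 1 ≤ n)
    {E : Type} [NormedAddCommGroup E] [InnerProductSpace ℂ E] [CompleteSpace E]
    (TP : HilbertTensorPower ℂ H n E)
    (f g : E) (hf : TP.IsSymmetric f) (hg : TP.IsSymmetric g) :
    Continuous fun θ : Fin n → ℝ => ⟪TP.map (fun i => RI.P (θ i)) f, g⟫_ℂ := by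
  classical
  have hid : ∀ (θ : ℝ) (x : H), RI.P θ (RI.P θ x) = RI.P θ x := by
    intro θ x
    have := congrArg (fun (T : H →L[ℂ] H) => T x) (RI.idem θ)
    simpa using this
  have hPP : ∀ (θ : ℝ) (x : H), ⟪RI.P θ x, RI.P θ x⟫_ℂ = ⟪RI.P θ x, x⟫_ℂ := by
    intro θ x
    have h1 := RI.selfadj θ (RI.P θ x) x
    rw [hid θ x] at h1
    exact h1.symm
  -- strong (norm) continuity of θ ↦ P θ x
  have hstrong : ∀ x : H, Continuous fun θ => RI.P θ x := by
    intro x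
    rw [continuous_iff_continuousAt]
    intro t
    have key : ∀ θ : ℝ, ‖RI.P θ x - RI.P t x‖ ^ 2 =
        (⟪RI.P θ x, x⟫_ℂ - ⟪RI.P θ x, RI.P t x⟫_ℂ
          - (starRingEnd ℂ) ⟪RI.P θ x, RI.P t x⟫_ℂ + ⟪RI.P t x, x⟫_ℂ).re := by
      intro θ
      have h0 : ((⟪(RI.P θ x - RI.P t x : H), (RI.P θ x - RI.P t x : H)⟫_ℂ)).re
          = ‖RI.P θ x - RI.P t x‖ ^ 2 := by
        simpa using inner_self_eq_norm_sq (𝕜 := ℂ) (RI.P θ x - RI.P t x)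
      rw [← h0, inner_sub_sub_self, hPP θ x, hPP t x, ← inner_conj_symm (RI.P t x)]
    have hc : Continuous fun θ : ℝ =>
        (⟪RI.P θ x, x⟫_ℂ - ⟪RI.P θ x, RI.P t x⟫_ℂ
          - (starRingEnd ℂ) ⟪RI.P θ x, RI.P t x⟫_ℂ + ⟪RI.P t x, x⟫_ℂ).re :=
      Complex.continuous_re.comp
        ((((hcont x x).sub (hcont x (RI.P t x))).sub
          (Complex.continuous_conj.comp (hcont x (RI.P t x)))).add continuous_const)
    have hval : (⟪RI.P t x, x⟫_ℂ - ⟪RI.P t x, RI.P t x⟫_ℂ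
          - (starRingEnd ℂ) ⟪RI.P t x, RI.P t x⟫_ℂ + ⟪RI.P t x, x⟫_ℂ).re = 0 := by
      rw [hPP t x]
      have h2 : ∀ a : ℂ, (a - a - (starRingEnd ℂ) a + a).re = 0 := fun a => by
        simp [Complex.sub_re, Complex.add_re, Complex.conj_re]
      exact h2 _
    have hsq : Tendsto (fun θ => ‖RI.P θ x - RI.P t x‖ ^ 2) (𝓝 t) (𝓝 0) := by
      simp only [key]
      have := hc.tendsto t
      rwa [hval] at this
    have hnorm : Tendsto (fun θ => ‖RI.P θ x - RI.P t x‖) (𝓝 t) (𝓝 0) := by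
      have h1 : Tendsto (fun θ => Real.sqrt (‖RI.P θ x - RI.P t x‖ ^ 2)) (𝓝 t)
          (𝓝 (Real.sqrt 0)) := (Real.continuous_sqrt.tendsto 0).comp hsq
      simpa [Real.sqrt_sq (norm_nonneg _)] using h1
    exact tendsto_iff_norm_sub_tendsto_zero.mpr hnorm
  -- continuity of tprod
  have htp : Continuous TP.tprod := by
    rw [continuous_iff_continuousAt]
    intro b
    have key : ∀ a : Fin n → H, ‖TP.tprod a - TP.tprod b‖ ^ 2 =
        ((∏ i, ⟪a i, a i⟫_ℂ) - (∏ i, ⟪a i, b i⟫_ℂ)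
          - (∏ i, ⟪b i, a i⟫_ℂ) + (∏ i, ⟪b i, b i⟫_ℂ)).re := by
      intro a
      have h0 : ((⟪(TP.tprod a - TP.tprod b : E), (TP.tprod a - TP.tprod b : E)⟫_ℂ)).re
          = ‖TP.tprod a - TP.tprod b‖ ^ 2 := by
        simpa using inner_self_eq_norm_sq (𝕜 := ℂ) (TP.tprod a - TP.tprod b)
      rw [← h0, inner_sub_sub_self, TP.inner_tprod, TP.inner_tprod, TP.inner_tprod,
        TP.inner_tprod]
    have hc : Continuous fun a : Fin n → H =>
        ((∏ i, ⟪a i, a i⟫_ℂ) - (∏ i, ⟪a i, b i⟫_ℂ)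
          - (∏ i, ⟪b i, a i⟫_ℂ) + (∏ i, ⟪b i, b i⟫_ℂ)).re := by
      apply Complex.continuous_re.comp
      refine (((?_ : Continuous _).sub ?_).sub ?_).add continuous_const
      · exact continuous_finset_prod _ fun i _ =>
          (continuous_apply i).inner (continuous_apply i)
      · exact continuous_finset_prod _ fun i _ =>
          (continuous_apply i).inner continuous_const
      · exact continuous_finset_prod _ fun i _ =>
          continuous_const.inner (continuous_apply i)
    have hval : ((∏ i, ⟪b i, b i⟫_ℂ) - (∏ i, ⟪b i, b i⟫_ℂ)
          - (∏ i, ⟪b i, b i⟫_ℂ) + (∏ i, ⟪b i, b i⟫_ℂ)).re = 0 := by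
      ring_nf
      simp
    have hsq : Tendsto (fun a => ‖TP.tprod a - TP.tprod b‖ ^ 2) (𝓝 b) (𝓝 0) := by
      simp only [key]
      have := hc.tendsto b
      rwa [hval] at this
    have hnorm : Tendsto (fun a => ‖TP.tprod a - TP.tprod b‖) (𝓝 b) (𝓝 0) := by
      have h1 : Tendsto (fun a => Real.sqrt (‖TP.tprod a - TP.tprod b‖ ^ 2)) (𝓝 b)
          (𝓝 (Real.sqrt 0)) := (Real.continuous_sqrt.tendsto 0).comp hsq
      simpa [Real.sqrt_sq (norm_nonneg _)] using h1
    exact tendsto_iff_norm_sub_tendsto_zero.mpr hnorm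
  -- operator norm bound
  have hmap1 : ∀ θ : Fin n → ℝ, ‖TP.map fun i => RI.P (θ i)‖ ≤ 1 := by
    intro θ
    refine le_trans (TP.map_norm _) ?_
    calc ∏ i, ‖RI.P (θ i)‖ ≤ ∏ _i : Fin n, (1 : ℝ) := by
          refine Finset.prod_le_prod (fun i _ => norm_nonneg _) (fun i _ => ?_)
          exact ContinuousLinearMap.opNorm_le_bound _ zero_le_one
            (fun x => by simpa using RI.norm_le (θ i) x)
      _ = 1 := by simp
  -- continuity on the span
  set S := Submodule.span ℂ (Set.range TP.tprod) with hS
  have hspan : ∀ f' ∈ S, Continuous fun θ : Fin n → ℝ =>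
      ⟪TP.map (fun i => RI.P (θ i)) f', g⟫_ℂ := by
    intro f' hf'
    induction hf' using Submodule.span_induction with
    | mem x hx =>
        obtain ⟨h, rfl⟩ := hx
        simp only [TP.map_tprod]
        exact (htp.comp (continuous_pi fun i =>
          ((hstrong (h i)).comp (continuous_apply i)))).inner continuous_const
    | zero => simpa using continuous_const
    | add x y _ _ hx hy =>
        simp only [map_add, inner_add_left]
        exact hx.add hy
    | smul c x _ hx =>
        simp only [_root_.map_smul, inner_smul_left]
        exact continuous_const.mul hx
  -- f lies in the closure of the span
  have hfmem : f ∈ closure (S : Set E) := by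
    have h1 : f ∈ S.topologicalClosure := by
      rw [TP.dense_span]
      exact Submodule.mem_top
    exact h1
  obtain ⟨u, hu_mem, hu_lim⟩ := mem_closure_iff_seq_limit.mp hfmem
  -- uniform convergence
  have hunif : TendstoUniformly
      (fun k (θ : Fin n → ℝ) => ⟪TP.map (fun i => RI.P (θ i)) (u k), g⟫_ℂ)
      (fun θ : Fin n → ℝ => ⟪TP.map (fun i => RI.P (θ i)) f, g⟫_ℂ) atTop := by
    rw [Metric.tendstoUniformly_iff]
    intro ε hε
    have hlim : Tendsto (fun k => ‖u k - f‖ * ‖g‖) atTop (𝓝 0) := by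
      have h0 : Tendsto (fun k => ‖u k - f‖) atTop (𝓝 0) :=
        tendsto_iff_norm_sub_tendsto_zero.mp hu_lim
      simpa using h0.mul_const ‖g‖
    filter_upwards [hlim.eventually (eventually_lt_nhds hε)] with k hk θ
    have hb : dist (⟪TP.map (fun i => RI.P (θ i)) f, g⟫_ℂ)
        (⟪TP.map (fun i => RI.P (θ i)) (u k), g⟫_ℂ) ≤ ‖u k - f‖ * ‖g‖ := by
      rw [dist_eq_norm]
      have h1 : ⟪TP.map (fun i => RI.P (θ i)) f, g⟫_ℂ
          - ⟪TP.map (fun i => RI.P (θ i)) (u k), g⟫_ℂ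
          = ⟪TP.map (fun i => RI.P (θ i)) (f - u k), g⟫_ℂ := by
        rw [map_sub, inner_sub_left]
      rw [h1]
      calc ‖⟪TP.map (fun i => RI.P (θ i)) (f - u k), g⟫_ℂ‖
          ≤ ‖TP.map (fun i => RI.P (θ i)) (f - u k)‖ * ‖g‖ := norm_inner_le_norm _ _
        _ ≤ (‖TP.map fun i => RI.P (θ i)‖ * ‖f - u k‖) * ‖g‖ :=
            mul_le_mul_of_nonneg_right (ContinuousLinearMap.le_opNorm _ _) (norm_nonneg _)
        _ ≤ (1 * ‖f - u k‖) * ‖g‖ :=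
            mul_le_mul_of_nonneg_right (mul_le_mul_of_nonneg_right (hmap1 θ)
              (norm_nonneg _)) (norm_nonneg _)
        _ = ‖u k - f‖ * ‖g‖ := by rw [one_mul, norm_sub_rev]
    exact lt_of_le_of_lt hb hk
  exact hunif.continuous (Filter.Eventually.of_forall fun k => hspan _ (hu_mem k)).frequently
end
end

section
/- Let R be a unitary operator on the Cameron–Martin space H (complexified if necessary) admitting an eigenvector z ∈ H, z ≠ 0, with eigenvalue c of modulus 1, and let T be the associated rotation of the Wiener space. Then δz∘T = c·δz μ-almost surely, the function f = |δz| satisfies f∘T = f μ-almost surely, and f is not μ-a.s. constant; consequently T is not ergodic. -/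
open MeasureTheory ProbabilityTheory Filter Topology
open scoped RealInnerProductSpace symmDiff

noncomputable section

/-- A *rotation* of an (abstract) Wiener space, in the sense of Üstünel–Zakai:
`δ : H → Ω → ℝ` is the Wiener integral on the Cameron–Martin space `H` (an isonormal
Gaussian process:  `δh` is centered Gaussian of variance `|h|²_H`, a.e.-linear in `h`,
and the `δh` generate the σ-algebra of `Ω` up to `μ`-null sets), `R` is a unitary
operator on `H`, and `T` is the associated measure-preserving transformation of `Ω`,
characterized by `δh ∘ T = δ(Rh)` a.s. for all `h ∈ H`. -/
structure GaussRotation (Ω : Type) [MeasurableSpace Ω] (μ : Measure Ω)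
    (H : Type) [NormedAddCommGroup H] [InnerProductSpace ℝ H] where
  δ : H → Ω → ℝ
  meas : ∀ h, Measurable (δ h)
  law : ∀ h : H, Measure.map (δ h) μ = gaussianReal 0 (‖h‖₊ ^ 2)
  add : ∀ g h : H, δ (g + h) =ᵐ[μ] δ g + δ h
  smul : ∀ (c : ℝ) (h : H), δ (c • h) =ᵐ[μ] c • δ h
  generating : ∀ A : Set Ω, MeasurableSet A →
    ∃ B : Set Ω, MeasurableSet[⨆ h : H, MeasurableSpace.comap (δ h) (borel ℝ)] B ∧
      μ (A ∆ B) = 0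
  R : H ≃ₗᵢ[ℝ] H
  T : Ω → Ω
  measT : Measurable T
  preserve : Measure.map T μ = μ
  rot : ∀ h : H, (fun ω => δ h (T ω)) =ᵐ[μ] δ (R h)

/-- A measure-preserving transformation is (strongly) mixing if
`E[(f∘Tⁿ)·g] → E[f]·E[g]` for all `f, g ∈ L²(μ)`. -/
def IsMixing {α : Type} [MeasurableSpace α] (f : α → α) (μ : Measure α) : Prop :=
  ∀ g₁ g₂ : α → ℝ, MemLp g₁ 2 μ → MemLp g₂ 2 μ →
    Tendsto (fun n : ℕ => ∫ ω, g₁ (f^[n] ω) * g₂ ω ∂μ) atTop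
      (𝓝 ((∫ ω, g₁ ω ∂μ) * ∫ ω, g₂ ω ∂μ))

open scoped InnerProductSpace

/-- A complexification of a real inner product space `H`: a complex inner product space
`Hc` together with an isometric real-linear embedding `j : H → Hc` and real/imaginary
part projections, so that every `x ∈ Hc` writes uniquely as `x = j(Re x) + i·j(Im x)`. -/
structure Complexification (H : Type) [NormedAddCommGroup H] [InnerProductSpace ℝ H]
    (Hc : Type) [NormedAddCommGroup Hc] [InnerProductSpace ℂ Hc] where
  j : H →ₗ[ℝ] Hc
  re : Hc →ₗ[ℝ] H
  im : Hc →ₗ[ℝ] H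
  inner_j : ∀ g h : H, ⟪j g, j h⟫_ℂ = (⟪g, h⟫_ℝ : ℂ)
  decomp : ∀ x : Hc, x = j (re x) + Complex.I • j (im x)
  re_j : ∀ h : H, re (j h) = h
  im_j : ∀ h : H, im (j h) = 0
  re_smulI : ∀ x : Hc, re (Complex.I • x) = - im x
  im_smulI : ∀ x : Hc, im (Complex.I • x) = re x

/-- The complexified Wiener integral `δ(h₁ + i h₂) = δh₁ + i δh₂`. -/
def complexδ {Ω : Type} [MeasurableSpace Ω] {μ : Measure Ω}
    {H : Type} [NormedAddCommGroup H] [InnerProductSpace ℝ H]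
    {Hc : Type} [NormedAddCommGroup Hc] [InnerProductSpace ℂ Hc]
    (GR : GaussRotation Ω μ H) (C : Complexification H Hc) (x : Hc) (ω : Ω) : ℂ :=
  (GR.δ (C.re x) ω : ℂ) + Complex.I * (GR.δ (C.im x) ω : ℂ)

/-- δ of a real linear combination. -/
lemma GaussRotation.combo {Ω : Type} [MeasurableSpace Ω] {μ : Measure Ω}
    {H : Type} [NormedAddCommGroup H] [InnerProductSpace ℝ H]
    (GR : GaussRotation Ω μ H) (a b : ℝ) (g h : H) :
    GR.δ (a • g + b • h) =ᵐ[μ] fun ω => a * GR.δ g ω + b * GR.δ h ω := by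
  filter_upwards [GR.add (a • g) (b • h), GR.smul a g, GR.smul b h] with ω h1 h2 h3
  simp only [Pi.add_apply] at h1
  simp only [Pi.smul_apply, smul_eq_mul] at h2 h3
  rw [h1, h2, h3]

/-- A Gaussian variable with nonzero variance is a.e. unbounded above in absolute value. -/
lemma gauss_unbounded {Ω : Type} [MeasurableSpace Ω] {μ : Measure Ω}
    {H : Type} [NormedAddCommGroup H] [InnerProductSpace ℝ H]
    (GR : GaussRotation Ω μ H) (h : H) (hh : h ≠ 0) (a : ℝ)
    (hb : ∀ᵐ ω ∂μ, |GR.δ h ω| ≤ a) : False := by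
  have hv : (‖h‖₊ ^ 2 : NNReal) ≠ 0 := pow_ne_zero _ (nnnorm_ne_zero_iff.mpr hh)
  have hmset : MeasurableSet {x : ℝ | a < |x|} :=
    measurableSet_lt measurable_const measurable_abs
  have h0 : μ (GR.δ h ⁻¹' {x : ℝ | a < |x|}) = 0 := by
    have := hb
    rw [MeasureTheory.ae_iff] at this
    convert this using 2
    ext ω
    simp [not_le]
  have hmap : (Measure.map (GR.δ h) μ) {x : ℝ | a < |x|} = 0 := by
    rw [Measure.map_apply (GR.meas h) hmset]
    exact h0
  rw [GR.law h] at hmap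
  have hsub : Set.Ioi (|a|) ⊆ {x : ℝ | a < |x|} := by
    intro x hx
    have hx' : (0:ℝ) ≤ |a| := abs_nonneg a
    have : (0:ℝ) < x := lt_of_le_of_lt hx' hx
    have : |x| = x := abs_of_pos this
    rw [Set.mem_setOf_eq, this]
    exact lt_of_le_of_lt (le_abs_self a) hx
  have hIoi : gaussianReal 0 (‖h‖₊ ^ 2) (Set.Ioi (|a|)) = 0 :=
    measure_mono_null hsub hmap
  rw [gaussianReal_of_var_ne_zero _ hv,
    withDensity_apply_eq_zero (measurable_gaussianPDF _ _)] at hIoi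
  have : {x : ℝ | gaussianPDF 0 (‖h‖₊ ^ 2) x ≠ 0} = Set.univ := by
    ext x
    simp [(gaussianPDF_pos 0 hv x).ne']
  rw [this, Set.univ_inter, Real.volume_Ioi] at hIoi
  exact ENNReal.top_ne_zero hIoi

/-- Let `R` be a unitary operator on the Cameron–Martin space `H`
(complexified if necessary) admitting an eigenvector `z ≠ 0` with eigenvalue `c` of
modulus `1`, and let `T` be the associated rotation.  Then `δz∘T = c·δz` a.s., the
function `f = |δz|` satisfies `f∘T = f` a.s. and is not a.s. constant; consequently `T`
is not ergodic. -/
theorem statement16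
    {Ω : Type} [MeasurableSpace Ω] (μ : Measure Ω) [IsProbabilityMeasure μ]
    {H : Type} [NormedAddCommGroup H] [InnerProductSpace ℝ H] [CompleteSpace H]
    {Hc : Type} [NormedAddCommGroup Hc] [InnerProductSpace ℂ Hc] [CompleteSpace Hc]
    (GR : GaussRotation Ω μ H) (C : Complexification H Hc)
    (Rc : Hc ≃ₗᵢ[ℂ] Hc) (hRc : ∀ h : H, Rc (C.j h) = C.j (GR.R h))
    (z : Hc) (hz : z ≠ 0) (c : ℂ) (hc : ‖c‖ = 1) (heig : Rc z = c • z) :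
    ((fun ω => complexδ GR C z (GR.T ω)) =ᵐ[μ] fun ω => c * complexδ GR C z ω)
    ∧ ((fun ω => ‖complexδ GR C z (GR.T ω)‖)
        =ᵐ[μ] fun ω => ‖complexδ GR C z ω‖)
    ∧ ¬ (∃ a : ℝ, (fun ω => ‖complexδ GR C z ω‖) =ᵐ[μ] fun _ => a)
    ∧ ¬ Ergodic GR.T μ := by
  set h₁ := C.re z with hh₁
  set h₂ := C.im z with hh₂
  -- Step A: Rc z decomposition
  have hz_eq : Rc z = C.j (GR.R h₁) + Complex.I • C.j (GR.R h₂) := by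
    conv_lhs => rw [C.decomp z]
    rw [map_add, LinearIsometryEquiv.map_smul, hRc, hRc]
  have hreRz : C.re (c • z) = GR.R h₁ := by
    rw [← heig, hz_eq, map_add, C.re_j, C.re_smulI, C.im_j, neg_zero, add_zero]
  have himRz : C.im (c • z) = GR.R h₂ := by
    rw [← heig, hz_eq, map_add, C.im_j, C.im_smulI, C.re_j, zero_add]
  -- Step B: real/imaginary parts of c • z
  have hcz : c • z = (c.re : ℝ) • z + (c.im : ℝ) • (Complex.I • z) := by
    calc c • z = ((c.re : ℂ) + (c.im : ℂ) * Complex.I) • z := by rw [Complex.re_add_im]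
      _ = (c.re : ℂ) • z + ((c.im : ℂ) * Complex.I) • z := add_smul _ _ _
      _ = (c.re : ℝ) • z + (c.im : ℝ) • (Complex.I • z) := by
          rw [mul_smul, Complex.coe_smul, Complex.coe_smul]
  have hreB : C.re (c • z) = c.re • h₁ + (-c.im) • h₂ := by
    rw [hcz, map_add, LinearMap.map_smul, LinearMap.map_smul, C.re_smulI, ← hh₁, ← hh₂]
    rw [smul_neg, neg_smul]
  have himB : C.im (c • z) = c.re • h₂ + c.im • h₁ := by
    rw [hcz, map_add, LinearMap.map_smul, LinearMap.map_smul, C.im_smulI, ← hh₁, ← hh₂]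
  have hR1 : GR.R h₁ = c.re • h₁ + (-c.im) • h₂ := by rw [← hreRz, hreB]
  have hR2 : GR.R h₂ = c.re • h₂ + c.im • h₁ := by rw [← himRz, himB]
  -- δ of the rotated vectors
  have E1 : GR.δ (GR.R h₁) =ᵐ[μ] fun ω => c.re * GR.δ h₁ ω + (-c.im) * GR.δ h₂ ω := by
    rw [hR1]; exact GR.combo _ _ _ _
  have E2 : GR.δ (GR.R h₂) =ᵐ[μ] fun ω => c.re * GR.δ h₂ ω + c.im * GR.δ h₁ ω := by
    rw [hR2]; exact GR.combo _ _ _ _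
  -- First conjunct
  have key : (fun ω => complexδ GR C z (GR.T ω)) =ᵐ[μ] fun ω => c * complexδ GR C z ω := by
    filter_upwards [GR.rot h₁, GR.rot h₂, E1, E2] with ω r1 r2 e1 e2
    simp only [complexδ, ← hh₁, ← hh₂]
    rw [r1, r2, e1, e2]
    simp only [Complex.ext_iff, Complex.add_re, Complex.add_im, Complex.mul_re,
      Complex.mul_im, Complex.ofReal_re, Complex.ofReal_im, Complex.I_re, Complex.I_im,
      Complex.ofReal_add, Complex.ofReal_mul, Complex.ofReal_neg, Complex.neg_re, Complex.neg_im]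
    constructor <;> ring
  refine ⟨key, ?_, ?_, ?_⟩
  · -- second conjunct
    filter_upwards [key] with ω hω
    rw [hω, norm_mul, hc, one_mul]
  · -- third conjunct: not a.e. constant
    rintro ⟨a, ha⟩
    have habs : ∀ ω, |GR.δ h₁ ω| ≤ ‖complexδ GR C z ω‖ ∧
        |GR.δ h₂ ω| ≤ ‖complexδ GR C z ω‖ := by
      intro ω
      have hre' : (complexδ GR C z ω).re = GR.δ h₁ ω := by
        simp [complexδ, ← hh₁, ← hh₂]
      have him' : (complexδ GR C z ω).im = GR.δ h₂ ω := by
        simp [complexδ, ← hh₁, ← hh₂]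
      exact ⟨hre' ▸ Complex.abs_re_le_norm _, him' ▸ Complex.abs_im_le_norm _⟩
    by_cases h10 : h₁ = 0
    · have h20 : h₂ ≠ 0 := by
        intro h20
        apply hz
        rw [C.decomp z, ← hh₁, ← hh₂, h10, h20]
        simp
      refine gauss_unbounded GR h₂ h20 a ?_
      filter_upwards [ha] with ω hω
      exact (habs ω).2.trans (le_of_eq hω)
    · refine gauss_unbounded GR h₁ h10 a ?_
      filter_upwards [ha] with ω hω
      exact (habs ω).1.trans (le_of_eq hω)
  · -- fourth conjunct: not ergodic
    intro hErg
    have hmeas : AEStronglyMeasurable (fun ω => ‖complexδ GR C z ω‖) μ := by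
      have : Measurable fun ω => complexδ GR C z ω := by
        apply Measurable.add
        · exact Complex.measurable_ofReal.comp (GR.meas _)
        · exact (Complex.measurable_ofReal.comp (GR.meas _)).const_mul _
      exact (continuous_norm.measurable.comp this).aestronglyMeasurable
    have hinv : (fun ω => ‖complexδ GR C z ω‖) ∘ GR.T
        =ᵐ[μ] fun ω => ‖complexδ GR C z ω‖ := by
      filter_upwards [key] with ω hω
      show ‖complexδ GR C z (GR.T ω)‖ = _
      rw [hω, norm_mul, hc, one_mul]
    obtain ⟨a, ha⟩ := hErg.ae_eq_const_of_ae_eq_comp_ae hmeas hinv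
    -- contradict the third conjunct (re-derive it inline)
    have habs : ∀ ω, |GR.δ h₁ ω| ≤ ‖complexδ GR C z ω‖ ∧
        |GR.δ h₂ ω| ≤ ‖complexδ GR C z ω‖ := by
      intro ω
      have hre' : (complexδ GR C z ω).re = GR.δ h₁ ω := by
        simp [complexδ, ← hh₁, ← hh₂]
      have him' : (complexδ GR C z ω).im = GR.δ h₂ ω := by
        simp [complexδ, ← hh₁, ← hh₂]
      exact ⟨hre' ▸ Complex.abs_re_le_norm _, him' ▸ Complex.abs_im_le_norm _⟩
    by_cases h10 : h₁ = 0
    · have h20 : h₂ ≠ 0 := by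
        intro h20
        apply hz
        rw [C.decomp z, ← hh₁, ← hh₂, h10, h20]
        simp
      refine gauss_unbounded GR h₂ h20 a ?_
      filter_upwards [ha] with ω hω
      exact (habs ω).2.trans (le_of_eq hω)
    · refine gauss_unbounded GR h₁ h10 a ?_
      filter_upwards [ha] with ω hω
      exact (habs ω).1.trans (le_of_eq hω)
end
end
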